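/- arXiv:2109.02267 — 2 statements merged into one kernel-verified Lean document; each statement's English description precedes it below -/
import Mathlib

section
/- Let r, r' ≥ 2 and let k = (k₁,…,k_{r−1}), k' = (k'₁,…,k'_{r'−1}) be tuples of elements of a set T, and let K ∈ T. Define, for a tuple m of elements of T (each element k_j carrying a 'size' ⟨ℓ_j⟩ ≥ 1), Υ(m) := max({1} ∪ {⟨ℓ_j⟩ : the entry m_j occurs exactly once in m}). Then Υ(k,k') ≤ Υ(k,K) · Υ(k',K), where (k,K) denotes the tuple k with K appended, and (k,k') the concatenation of k and k'. -/
/-- `upsilon size l` is the largest size of an entry of `l` occurring exactly once in `l`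
(and `1` if there is none). -/
noncomputable def upsilon {T : Type*} [DecidableEq T] (size : T → ℝ) (l : List T) : ℝ :=
  ((l.filter (fun a => l.count a = 1)).map size).foldr max 1

lemma foldr_max_le (L : List ℝ) (x : ℝ) (h1 : 1 ≤ x) (h : ∀ a ∈ L, a ≤ x) :
    L.foldr max 1 ≤ x := by
  induction L with
  | nil => simpa
  | cons a t ih =>
    simp only [List.foldr_cons, max_le_iff]
    exact ⟨h a (by simp), ih fun b hb => h b (by simp [hb])⟩

lemma le_foldr_max (L : List ℝ) (a : ℝ) (ha : a ∈ L) : a ≤ L.foldr max 1 := by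
  induction L with
  | nil => simp at ha
  | cons b t ih =>
    simp only [List.foldr_cons]
    rcases List.mem_cons.1 ha with h | h
    · exact h ▸ le_max_left _ _
    · exact (ih h).trans (le_max_right _ _)

lemma one_le_upsilon {T : Type*} [DecidableEq T] (size : T → ℝ) (l : List T) :
    1 ≤ upsilon size l := by
  unfold upsilon
  induction ((l.filter (fun a => l.count a = 1)).map size) with
  | nil => simp
  | cons a t ih => exact ih.trans (le_max_right _ _)

lemma le_upsilon {T : Type*} [DecidableEq T] (size : T → ℝ) (l : List T) (b : T)
    (hb : b ∈ l) (hc : l.count b = 1) : size b ≤ upsilon size l := by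
  apply le_foldr_max
  exact List.mem_map_of_mem (List.mem_filter.2 ⟨hb, by simp [hc]⟩)

/-- Submultiplicativity of `Υ` under concatenation: `Υ(k,k') ≤ Υ(k,K)·Υ(k',K)`. -/
theorem stmt_15 {T : Type*} [DecidableEq T] (size : T → ℝ) (hsize : ∀ t, 1 ≤ size t)
    (r r' : ℕ) (hr : 2 ≤ r) (hr' : 2 ≤ r')
    (k k' : List T) (hk : k.length = r - 1) (hk' : k'.length = r' - 1) (K : T) :
    upsilon size (k ++ k') ≤ upsilon size (k ++ [K]) * upsilon size (k' ++ [K]) := by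
  have hB := one_le_upsilon size (k ++ [K])
  have hC := one_le_upsilon size (k' ++ [K])
  apply foldr_max_le
  · nlinarith
  · intro a ha
    obtain ⟨b, hb, rfl⟩ := List.mem_map.1 ha
    obtain ⟨hbmem, hbc⟩ := List.mem_filter.1 hb
    have hbc' : (k ++ k').count b = 1 := by simpa using hbc
    rw [List.count_append] at hbc'
    have hcases : (k.count b = 1 ∧ k'.count b = 0) ∨ (k.count b = 0 ∧ k'.count b = 1) := by
      omega
    rcases hcases with ⟨h1, h2⟩ | ⟨h1, h2⟩
    · by_cases hbK : b = K
      · subst hbK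
        have : size b ≤ upsilon size (k' ++ [b]) := by
          apply le_upsilon
          · simp
          · simp [List.count_append, h2]
        calc size b ≤ 1 * upsilon size (k' ++ [b]) := by rw [one_mul]; exact this
          _ ≤ upsilon size (k ++ [b]) * upsilon size (k' ++ [b]) := by
              apply mul_le_mul_of_nonneg_right hB (by linarith)
      · have hmem : b ∈ k := List.count_pos_iff.1 (by omega)
        have : size b ≤ upsilon size (k ++ [K]) := by
          apply le_upsilon
          · simp [hmem]
          · simp [List.count_append, h1, List.count_singleton, hbK, Ne.symm hbK]
        calc size b ≤ upsilon size (k ++ [K]) * 1 := by rw [mul_one]; exact this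
          _ ≤ _ := by apply mul_le_mul_of_nonneg_left hC (by linarith)
    · by_cases hbK : b = K
      · subst hbK
        have : size b ≤ upsilon size (k ++ [b]) := by
          apply le_upsilon
          · simp
          · simp [List.count_append, h1]
        calc size b ≤ upsilon size (k ++ [b]) * 1 := by rw [mul_one]; exact this
          _ ≤ _ := by apply mul_le_mul_of_nonneg_left hC (by linarith)
      · have hmem : b ∈ k' := List.count_pos_iff.1 (by omega)
        have : size b ≤ upsilon size (k' ++ [K]) := by
          apply le_upsilon
          · simp [hmem]
          · simp [List.count_append, h2, List.count_singleton, hbK, Ne.symm hbK]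
        calc size b ≤ 1 * upsilon size (k' ++ [K]) := by rw [one_mul]; exact this
          _ ≤ _ := by apply mul_le_mul_of_nonneg_right hB (by linarith)
end

section
/- Let M ≥ 2 and r ≥ 2 be integers and let T_M = {(ℓ,m) : 0 ≤ ℓ ≤ M, |m| ≤ ℓ}. Let H : ℂ^{T_M} → ℝ be a homogeneous polynomial of degree r with symmetric coefficients, H(u) = ∑_{σ∈{−1,1}^r} ∑_{k∈T_M^r} H_k^σ u_{k₁}^{σ₁}⋯u_{k_r}^{σ_r} (where u^{1} = u and u^{−1} = ū), and suppose |H_k^σ| ≤ A/√(⟨ℓ₁⟩⋯⟨ℓ_r⟩) for all k and σ. Then for all u ∈ ℂ^{T_M}, ‖∇H(u)‖_{h^{−1/2}} ≤ C_r · (log M)^{r/2} · A · ‖u‖_{h^{1/2}}^{r−1}, where ‖u‖²_{h^s} = ∑_{k=(ℓ,m)∈T_M} ⟨ℓ⟩^{2s}|u_k|², ⟨ℓ⟩ = √(1+ℓ²), and C_r depends only on r. -/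
/-- The index set `T_M = {(ℓ,m) : 0 ≤ ℓ ≤ M, |m| ≤ ℓ}`, realized as a sigma type
(the fiber over `ℓ` has `2ℓ+1` elements). -/
abbrev TM (M : ℕ) := Σ ℓ : Fin (M + 1), Fin (2 * (ℓ : ℕ) + 1)

open Finset in
lemma fderiv_eval {M r : ℕ} (Hc : (Fin r → TM M) → (Fin r → Bool) → ℂ)
    (u v : TM M → ℂ) :
    fderiv ℝ (fun w : TM M → ℂ =>
        ∑ σ : Fin r → Bool, ∑ k : Fin r → TM M,
          (Hc k σ * ∏ j, (if σ j then w (k j) else (starRingEnd ℂ) (w (k j)))).re) u v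
      = ∑ σ : Fin r → Bool, ∑ k : Fin r → TM M,
          (Hc k σ * ∑ i, (∏ j ∈ Finset.univ.erase i,
              (if σ j then u (k j) else (starRingEnd ℂ) (u (k j)))) *
              (if σ i then v (k i) else (starRingEnd ℂ) (v (k i)))).re := by
  classical
  set foo : (Fin r → TM M) → (Fin r → Bool) → Fin r → ((TM M → ℂ) →L[ℝ] ℂ) :=
    fun k σ j => if σ j then ContinuousLinearMap.proj (k j)
      else Complex.conjCLE.toContinuousLinearMap.comp (ContinuousLinearMap.proj (k j)) with hfoo
  have hfac : ∀ (k : Fin r → TM M) (σ : Fin r → Bool) (j : Fin r),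
      HasFDerivAt (fun w : TM M → ℂ => if σ j then w (k j) else (starRingEnd ℂ) (w (k j)))
        (foo k σ j) u := by
    intro k σ j
    by_cases h : σ j <;> simp [hfoo, h]
    · exact (ContinuousLinearMap.proj (R := ℝ) (φ := fun _ : TM M => ℂ) (k j)).hasFDerivAt
    · exact (Complex.conjCLE.toContinuousLinearMap.comp
        (ContinuousLinearMap.proj (R := ℝ) (φ := fun _ : TM M => ℂ) (k j))).hasFDerivAt
  have hprod : ∀ (k : Fin r → TM M) (σ : Fin r → Bool),
      HasFDerivAt (fun w : TM M → ℂ => ∏ j, (if σ j then w (k j) else (starRingEnd ℂ) (w (k j))))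
        (∑ i, (∏ j ∈ Finset.univ.erase i,
            (if σ j then u (k j) else (starRingEnd ℂ) (u (k j)))) • foo k σ i) u := by
    intro k σ
    exact HasFDerivAt.finset_prod (fun i _ => hfac k σ i)
  have hterm : ∀ (k : Fin r → TM M) (σ : Fin r → Bool),
      HasFDerivAt (fun w : TM M → ℂ =>
          (Hc k σ * ∏ j, (if σ j then w (k j) else (starRingEnd ℂ) (w (k j)))).re)
        (Complex.reCLM.comp (Hc k σ • ∑ i, (∏ j ∈ Finset.univ.erase i,
            (if σ j then u (k j) else (starRingEnd ℂ) (u (k j)))) • foo k σ i)) u := by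
    intro k σ
    exact Complex.reCLM.hasFDerivAt.comp u ((hprod k σ).const_mul (Hc k σ))
  have hsum : HasFDerivAt (fun w : TM M → ℂ =>
      ∑ σ : Fin r → Bool, ∑ k : Fin r → TM M,
        (Hc k σ * ∏ j, (if σ j then w (k j) else (starRingEnd ℂ) (w (k j)))).re)
      (∑ σ : Fin r → Bool, ∑ k : Fin r → TM M,
        Complex.reCLM.comp (Hc k σ • ∑ i, (∏ j ∈ Finset.univ.erase i,
            (if σ j then u (k j) else (starRingEnd ℂ) (u (k j)))) • foo k σ i)) u :=
    HasFDerivAt.fun_sum (fun σ _ => HasFDerivAt.fun_sum (fun k _ => hterm k σ))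
  rw [hsum.fderiv]
  simp only [ContinuousLinearMap.sum_apply, ContinuousLinearMap.comp_apply,
    ContinuousLinearMap.smul_apply, Complex.reCLM_apply, hfoo]
  congr 1; ext σ; congr 1; ext k; congr 2
  refine Finset.sum_congr rfl fun i _ => ?_
  by_cases h : σ i <;> simp [h, smul_eq_mul]

open Finset in
lemma grad_bound {M r : ℕ} (Hc : (Fin r → TM M) → (Fin r → Bool) → ℂ) (u g : TM M → ℂ)
    (hgrad : ∀ v : TM M → ℂ,
        fderiv ℝ (fun w : TM M → ℂ =>
            ∑ σ : Fin r → Bool, ∑ k : Fin r → TM M,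
              (Hc k σ * ∏ j, (if σ j then w (k j) else (starRingEnd ℂ) (w (k j)))).re) u v
          = ∑ kk : TM M, (g kk * (starRingEnd ℂ) (v kk)).re) (kk : TM M) :
    ‖g kk‖ ≤ ∑ σ : Fin r → Bool, ∑ k : Fin r → TM M, ∑ i : Fin r,
      (if k i = kk then ‖Hc k σ‖ * ∏ j ∈ Finset.univ.erase i,
          ‖u (k j)‖ else 0) := by
  classical
  have hS0 : (0:ℝ) ≤ ∑ σ : Fin r → Bool, ∑ k : Fin r → TM M, ∑ i : Fin r,
      (if k i = kk then ‖Hc k σ‖ * ∏ j ∈ Finset.univ.erase i,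
          ‖u (k j)‖ else 0) := by
    refine Finset.sum_nonneg fun σ _ => Finset.sum_nonneg fun k _ =>
      Finset.sum_nonneg fun i _ => ?_
    split
    · positivity
    · exact le_refl 0
  rcases eq_or_ne (g kk) 0 with h0 | h0
  · rw [h0]; simpa using hS0
  set c : ℂ := (‖g kk‖ : ℂ)⁻¹ * g kk with hc
  have habsg : (‖g kk‖ : ℝ) ≠ 0 := by simpa using h0
  have hne : ((‖g kk‖ : ℝ) : ℂ) ≠ 0 := by exact_mod_cast habsg
  have hcabs : ‖c‖ = 1 := by
    rw [hc, norm_mul, norm_inv, Complex.norm_real, Real.norm_eq_abs, abs_of_nonneg (norm_nonneg _),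
      inv_mul_cancel₀ habsg]
  set v : TM M → ℂ := Pi.single kk c with hv
  have hvkk : v kk = c := by rw [hv, Pi.single_eq_same]
  have hvne : ∀ b : TM M, b ≠ kk → v b = 0 := fun b hb => by rw [hv, Pi.single_eq_of_ne hb]
  have hvabs : ∀ b : TM M, ‖v b‖ = if b = kk then 1 else 0 := by
    intro b
    by_cases h : b = kk
    · rw [if_pos h, h, hvkk, hcabs]
    · rw [if_neg h, hvne b h, norm_zero]
  have hgc : (g kk * (starRingEnd ℂ) c).re = ‖g kk‖ := by
    rw [hc, map_mul, map_inv₀, Complex.conj_ofReal, mul_comm ((‖g kk‖:ℂ))⁻¹,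
      ← mul_assoc, Complex.mul_conj, Complex.normSq_eq_norm_sq, Complex.ofReal_pow, sq,
      mul_assoc, mul_inv_cancel₀ hne, mul_one, Complex.ofReal_re]
  have hval : ‖g kk‖ = ∑ kk' : TM M, (g kk' * (starRingEnd ℂ) (v kk')).re := by
    rw [Finset.sum_eq_single kk]
    · rw [hvkk, hgc]
    · intro b _ hb; rw [hvne b hb]; simp
    · intro h; exact absurd (Finset.mem_univ kk) h
  rw [hval, ← hgrad v, fderiv_eval]
  refine Finset.sum_le_sum fun σ _ => Finset.sum_le_sum fun k _ => ?_
  calc (Hc k σ * ∑ i, (∏ j ∈ Finset.univ.erase i,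
          (if σ j then u (k j) else (starRingEnd ℂ) (u (k j)))) *
          (if σ i then v (k i) else (starRingEnd ℂ) (v (k i)))).re
      ≤ ‖Hc k σ * ∑ i, (∏ j ∈ Finset.univ.erase i,
          (if σ j then u (k j) else (starRingEnd ℂ) (u (k j)))) *
          (if σ i then v (k i) else (starRingEnd ℂ) (v (k i)))‖ :=
        Complex.re_le_norm _
    _ ≤ ‖Hc k σ‖ * ∑ i, ‖(∏ j ∈ Finset.univ.erase i,
          (if σ j then u (k j) else (starRingEnd ℂ) (u (k j)))) *
          (if σ i then v (k i) else (starRingEnd ℂ) (v (k i)))‖ := by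
        rw [norm_mul]
        exact mul_le_mul_of_nonneg_left (norm_sum_le _ _) (norm_nonneg _)
    _ = ∑ i, ‖Hc k σ‖ * ((∏ j ∈ Finset.univ.erase i, ‖u (k j)‖) *
          ‖v (k i)‖) := by
        rw [Finset.mul_sum]
        refine Finset.sum_congr rfl fun i _ => ?_
        rw [norm_mul, norm_prod]
        congr 2
        · exact Finset.prod_congr rfl fun j _ => by
            by_cases h : σ j <;> simp [h, Complex.norm_conj]
        · by_cases h : σ i <;> simp [h, Complex.norm_conj]
    _ ≤ ∑ i, (if k i = kk then ‖Hc k σ‖ * ∏ j ∈ Finset.univ.erase i,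
          ‖u (k j)‖ else 0) := by
        refine Finset.sum_le_sum fun i _ => ?_
        rw [hvabs (k i)]
        by_cases h : k i = kk
        · rw [if_pos h, if_pos h, mul_one]
        · rw [if_neg h, if_neg h, mul_zero, mul_zero]


lemma sqrt_prod' {ι : Type*} (s : Finset ι) (f : ι → ℝ) (hf : ∀ i ∈ s, 0 ≤ f i) :
    Real.sqrt (∏ i ∈ s, f i) = ∏ i ∈ s, Real.sqrt (f i) := by
  classical
  induction s using Finset.cons_induction with
  | empty => simp
  | cons a s ha ih =>
    rw [Finset.prod_cons, Finset.prod_cons, Real.sqrt_mul (hf a (Finset.mem_cons_self a s)),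
      ih (fun i hi => hf i (Finset.mem_cons_of_mem hi))]

open Finset in
lemma S_bound {M r : ℕ} (A : ℝ) (Hc : (Fin r → TM M) → (Fin r → Bool) → ℂ)
    (hbound : ∀ (k : Fin r → TM M) (σ : Fin r → Bool),
        ‖Hc k σ‖ ≤ A / Real.sqrt (∏ j, Real.sqrt (1 + (((k j).1 : ℕ) : ℝ) ^ 2)))
    (hA : 0 ≤ A) (u : TM M → ℂ) (kk : TM M) :
    (∑ σ : Fin r → Bool, ∑ k : Fin r → TM M, ∑ i : Fin r,
      if k i = kk then ‖Hc k σ‖ * ∏ j ∈ Finset.univ.erase i,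
        ‖u (k j)‖ else 0)
    ≤ 2^r * r * (A * (Real.sqrt (Real.sqrt (1 + ((kk.1:ℕ):ℝ)^2)))⁻¹ *
        (∑ x : TM M, (Real.sqrt (Real.sqrt (1 + ((x.1:ℕ):ℝ)^2)))⁻¹ * ‖u x‖)^(r-1)) := by
  classical
  set h : TM M → ℝ := fun x => (Real.sqrt (Real.sqrt (1 + ((x.1:ℕ):ℝ)^2)))⁻¹ * ‖u x‖
    with hh
  have hh0 : ∀ x, 0 ≤ h x := fun x => by rw [hh]; positivity
  set B : ℝ := A * (Real.sqrt (Real.sqrt (1 + ((kk.1:ℕ):ℝ)^2)))⁻¹ * (∑ x : TM M, h x)^(r-1)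
    with hB
  have hB0 : 0 ≤ B := by
    rw [hB]
    have := Finset.sum_nonneg (fun x (_ : x ∈ Finset.univ) => hh0 x)
    positivity
  have key : ∀ (σ : Fin r → Bool) (i : Fin r),
      (∑ k : Fin r → TM M, if k i = kk then ‖Hc k σ‖ *
        ∏ j ∈ Finset.univ.erase i, ‖u (k j)‖ else 0) ≤ B := by
    intro σ i
    set Hf : Fin r → TM M → ℝ :=
      fun j x => if j = i then (if x = kk then 1 else 0) else h x with hHf
    have hHf0 : ∀ j x, 0 ≤ Hf j x := by
      intro j x; rw [hHf]; dsimp only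
      split
      · split
        · exact zero_le_one
        · exact le_refl 0
      · exact hh0 x
    have step1 : ∀ k : Fin r → TM M,
        (if k i = kk then ‖Hc k σ‖ *
          ∏ j ∈ Finset.univ.erase i, ‖u (k j)‖ else 0)
        ≤ (A * (Real.sqrt (Real.sqrt (1 + ((kk.1:ℕ):ℝ)^2)))⁻¹) * ∏ j, Hf j (k j) := by
      intro k
      have hprodHf : ∏ j, Hf j (k j)
          = (if k i = kk then 1 else 0) * ∏ j ∈ Finset.univ.erase i, h (k j) := by
        rw [← Finset.mul_prod_erase Finset.univ (fun j => Hf j (k j)) (Finset.mem_univ i)]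
        congr 1
        · rw [hHf]; simp
        · refine Finset.prod_congr rfl fun j hj => ?_
          rw [hHf]; simp [Finset.ne_of_mem_erase hj]
      by_cases hki : k i = kk
      · rw [if_pos hki, hprodHf, if_pos hki, one_mul]
        have hcoef : ‖Hc k σ‖
            ≤ A * ∏ j, (Real.sqrt (Real.sqrt (1 + (((k j).1:ℕ):ℝ)^2)))⁻¹ := by
          refine (hbound k σ).trans_eq ?_
          rw [sqrt_prod' _ _ (fun j _ => Real.sqrt_nonneg _), div_eq_mul_inv,
            ← Finset.prod_inv_distrib]
        calc ‖Hc k σ‖ * ∏ j ∈ Finset.univ.erase i, ‖u (k j)‖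
            ≤ (A * ∏ j, (Real.sqrt (Real.sqrt (1 + (((k j).1:ℕ):ℝ)^2)))⁻¹)
              * ∏ j ∈ Finset.univ.erase i, ‖u (k j)‖ := by
              refine mul_le_mul_of_nonneg_right hcoef ?_
              exact Finset.prod_nonneg fun j _ => norm_nonneg _
          _ = (A * (Real.sqrt (Real.sqrt (1 + ((kk.1:ℕ):ℝ)^2)))⁻¹)
              * ∏ j ∈ Finset.univ.erase i, h (k j) := by
              have hsplit : ∏ j ∈ Finset.univ.erase i, h (k j)
                  = (∏ j ∈ Finset.univ.erase i,
                      (Real.sqrt (Real.sqrt (1 + (((k j).1:ℕ):ℝ)^2)))⁻¹)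
                    * ∏ j ∈ Finset.univ.erase i, ‖u (k j)‖ := by
                rw [← Finset.prod_mul_distrib]
              rw [hsplit, ← Finset.mul_prod_erase Finset.univ
                (fun j => (Real.sqrt (Real.sqrt (1 + (((k j).1:ℕ):ℝ)^2)))⁻¹) (Finset.mem_univ i),
                hki]
              ring
      · rw [if_neg hki, hprodHf, if_neg hki, zero_mul, mul_zero]
    calc (∑ k : Fin r → TM M, if k i = kk then ‖Hc k σ‖ *
          ∏ j ∈ Finset.univ.erase i, ‖u (k j)‖ else 0)
        ≤ ∑ k : Fin r → TM M,
          (A * (Real.sqrt (Real.sqrt (1 + ((kk.1:ℕ):ℝ)^2)))⁻¹) * ∏ j, Hf j (k j) :=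
          Finset.sum_le_sum fun k _ => step1 k
      _ = (A * (Real.sqrt (Real.sqrt (1 + ((kk.1:ℕ):ℝ)^2)))⁻¹)
            * ∑ k : Fin r → TM M, ∏ j, Hf j (k j) := by rw [← Finset.mul_sum]
      _ = B := by
          rw [hB]
          have hswap : (∏ j, ∑ x : TM M, Hf j x) = ∑ k : Fin r → TM M, ∏ j, Hf j (k j) := by
            rw [Finset.prod_univ_sum]
            rw [Fintype.piFinset_univ]
          have heq : (∑ k : Fin r → TM M, ∏ j, Hf j (k j)) = (∑ x : TM M, h x)^(r-1) := by
            rw [← hswap]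
            rw [← Finset.mul_prod_erase Finset.univ (fun j => ∑ x : TM M, Hf j x)
              (Finset.mem_univ i)]
            have h1 : (∑ x : TM M, Hf i x) = 1 := by rw [hHf]; simp
            have h2 : ∀ j ∈ Finset.univ.erase i, (∑ x : TM M, Hf j x) = ∑ x : TM M, h x := by
              intro j hj
              refine Finset.sum_congr rfl fun x _ => ?_
              rw [hHf]; simp [Finset.ne_of_mem_erase hj]
            rw [h1, one_mul, Finset.prod_congr rfl h2, Finset.prod_const,
              Finset.card_erase_of_mem (Finset.mem_univ i), Finset.card_univ, Fintype.card_fin]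
          rw [heq]
  calc (∑ σ : Fin r → Bool, ∑ k : Fin r → TM M, ∑ i : Fin r,
        if k i = kk then ‖Hc k σ‖ * ∏ j ∈ Finset.univ.erase i,
          ‖u (k j)‖ else 0)
      = ∑ σ : Fin r → Bool, ∑ i : Fin r, ∑ k : Fin r → TM M,
        (if k i = kk then ‖Hc k σ‖ * ∏ j ∈ Finset.univ.erase i,
          ‖u (k j)‖ else 0) := by
        refine Finset.sum_congr rfl fun σ _ => ?_
        rw [Finset.sum_comm]
    _ ≤ ∑ σ : Fin r → Bool, ∑ i : Fin r, B :=
        Finset.sum_le_sum fun σ _ => Finset.sum_le_sum fun i _ => key σ i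
    _ = 2^r * r * B := by
        rw [Finset.sum_const, Finset.sum_const, Finset.card_univ, Finset.card_univ,
          Fintype.card_fin, Fintype.card_fun, Fintype.card_bool, Fintype.card_fin,
          nsmul_eq_mul, nsmul_eq_mul]
        push_cast
        ring


lemma harmonic_le_log (n : ℕ) :
    ∑ i ∈ Finset.range (n+1), ((i:ℝ)+1)⁻¹ ≤ 1 + Real.log ((n:ℝ)+1) := by
  induction n with
  | zero => simp
  | succ n ih =>
    rw [Finset.sum_range_succ]
    have hpos : (0:ℝ) < (n:ℝ)+1 := by positivity
    have hpos2 : (0:ℝ) < (n:ℝ)+1+1 := by positivity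
    have h1 := Real.log_le_sub_one_of_pos (show (0:ℝ) < ((n:ℝ)+1)/((n:ℝ)+1+1) by positivity)
    rw [Real.log_div (ne_of_gt hpos) (ne_of_gt hpos2)] at h1
    have h2 : ((n:ℝ)+1)/((n:ℝ)+1+1) - 1 = -(((n:ℝ)+1+1)⁻¹) := by
      field_simp
      ring
    rw [h2] at h1
    push_cast
    push_cast at ih
    linarith

open Finset in
lemma sum_inv_le (M : ℕ) (hM : 2 ≤ M) :
    ∑ kk : TM M, (1 + ((kk.1:ℕ):ℝ)^2)⁻¹ ≤ 12 * Real.log M := by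
  have hMR : (2:ℝ) ≤ (M:ℝ) := by exact_mod_cast hM
  have hlog2 : (0.6931471803:ℝ) < Real.log 2 := Real.log_two_gt_d9
  have hlogM : Real.log 2 ≤ Real.log M := Real.log_le_log (by norm_num) hMR
  have step1 : ∑ kk : TM M, (1 + ((kk.1:ℕ):ℝ)^2)⁻¹
      = ∑ ℓ : Fin (M+1), ((2*(ℓ:ℕ)+1 : ℕ):ℝ) * (1 + ((ℓ:ℕ):ℝ)^2)⁻¹ := by
    rw [← Finset.univ_sigma_univ, Finset.sum_sigma]
    refine Finset.sum_congr rfl fun ℓ _ => ?_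
    simp [Finset.sum_const, Finset.card_univ, nsmul_eq_mul]
  have step2 : ∀ ℓ : Fin (M+1), ((2*(ℓ:ℕ)+1 : ℕ):ℝ) * (1 + ((ℓ:ℕ):ℝ)^2)⁻¹
      ≤ 3 * (((ℓ:ℕ):ℝ)+1)⁻¹ := by
    intro ℓ
    set x : ℝ := ((ℓ:ℕ):ℝ) with hx
    have hx0 : 0 ≤ x := by rw [hx]; positivity
    have hkey : (2*x+1) * (x+1) ≤ 3 * (1 + x^2) := by
      rcases Nat.lt_or_ge (ℓ:ℕ) 2 with h | h
      · have hx1 : x ≤ 1 := by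
          rw [hx]; exact_mod_cast Nat.lt_succ_iff.mp h
        nlinarith
      · have hx2 : (2:ℝ) ≤ x := by rw [hx]; exact_mod_cast h
        nlinarith
    have h1 : (0:ℝ) < 1 + x^2 := by positivity
    have h2 : (0:ℝ) < x+1 := by positivity
    have hcast : ((2*(ℓ:ℕ)+1 : ℕ):ℝ) = 2*x+1 := by push_cast [hx]; ring
    rw [hcast, ← div_eq_mul_inv, ← div_eq_mul_inv, div_le_div_iff₀ h1 h2]
    linarith
  have step3 : ∑ ℓ : Fin (M+1), 3 * (((ℓ:ℕ):ℝ)+1)⁻¹ ≤ 3 * (1 + Real.log ((M:ℝ)+1)) := by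
    rw [Fin.sum_univ_eq_sum_range (fun i => 3 * (((i:ℕ):ℝ)+1)⁻¹) (M+1), ← Finset.mul_sum]
    have := harmonic_le_log M
    nlinarith [this]
  have step4 : Real.log ((M:ℝ)+1) ≤ 2 * Real.log M := by
    have h1 : (M:ℝ)+1 ≤ (M:ℝ)^2 := by nlinarith
    have h2 : Real.log ((M:ℝ)+1) ≤ Real.log ((M:ℝ)^2) := Real.log_le_log (by positivity) h1
    rwa [Real.log_pow, Nat.cast_ofNat] at h2
  calc ∑ kk : TM M, (1 + ((kk.1:ℕ):ℝ)^2)⁻¹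
      = ∑ ℓ : Fin (M+1), ((2*(ℓ:ℕ)+1 : ℕ):ℝ) * (1 + ((ℓ:ℕ):ℝ)^2)⁻¹ := step1
    _ ≤ ∑ ℓ : Fin (M+1), 3 * (((ℓ:ℕ):ℝ)+1)⁻¹ := Finset.sum_le_sum fun ℓ _ => step2 ℓ
    _ ≤ 3 * (1 + Real.log ((M:ℝ)+1)) := step3
    _ ≤ 12 * Real.log M := by nlinarith



lemma ptwise_CS (W a : ℝ) (hW : 0 < W) (ha : 0 ≤ a) :
    Real.sqrt (W⁻¹) * Real.sqrt (Real.sqrt W * a^2)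
      = (Real.sqrt (Real.sqrt W))⁻¹ * a := by
  have hs0 : 0 < Real.sqrt W := Real.sqrt_pos.mpr hW
  have hmul : Real.sqrt W * Real.sqrt W = W := Real.mul_self_sqrt hW.le
  rw [← Real.sqrt_mul (by positivity)]
  have hWW : W⁻¹ * (Real.sqrt W * a^2) = (Real.sqrt W)⁻¹ * a^2 := by
    rw [← hmul, mul_inv]
    field_simp
    rw [Real.sqrt_sq hs0.le]
  rw [hWW, Real.sqrt_mul (by positivity), Real.sqrt_inv, Real.sqrt_sq ha]

lemma inv_sqrt_sq (W : ℝ) (hW : 0 < W) :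
    (Real.sqrt W)⁻¹ * ((Real.sqrt (Real.sqrt W))⁻¹)^2 = W⁻¹ := by
  rw [inv_pow, Real.sq_sqrt (Real.sqrt_nonneg W), ← mul_inv, Real.mul_self_sqrt hW.le]

/-- Multilinear vector field estimate in `h^{-1/2}` (Lemma 4.4): if the coefficients of a
real-valued homogeneous polynomial `H` of degree `r` on `ℂ^{T_M}` satisfy
`|H_k^σ| ≤ A/√(⟨ℓ₁⟩⋯⟨ℓ_r⟩)`, then `‖∇H(u)‖_{h^{-1/2}} ≤ C_r (log M)^{r/2} A ‖u‖_{h^{1/2}}^{r-1}`,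
where the gradient is taken with respect to the real `ℓ²` inner product
`(g,v) = Re ∑_k g_k conj v_k`. -/
theorem stmt_16 (r : ℕ) (hr : 2 ≤ r) :
    ∃ C > 0, ∀ M : ℕ, 2 ≤ M → ∀ A : ℝ,
    ∀ Hc : (Fin r → TM M) → (Fin r → Bool) → ℂ,
    -- symmetry of the coefficients
    (∀ (k : Fin r → TM M) (σ : Fin r → Bool) (ρ : Equiv.Perm (Fin r)),
        Hc (k ∘ ρ) (σ ∘ ρ) = Hc k σ) →
    -- reality condition (H takes real values)
    (∀ (k : Fin r → TM M) (σ : Fin r → Bool),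
        Hc k (fun j => !σ j) = (starRingEnd ℂ) (Hc k σ)) →
    -- coefficient bound
    (∀ (k : Fin r → TM M) (σ : Fin r → Bool),
        ‖Hc k σ‖ ≤ A / Real.sqrt (∏ j, Real.sqrt (1 + (((k j).1 : ℕ) : ℝ) ^ 2))) →
    ∀ u g : TM M → ℂ,
    -- `g` is the gradient of `H` at `u` for the real `ℓ²` inner product
    (∀ v : TM M → ℂ,
        fderiv ℝ (fun w : TM M → ℂ =>
            ∑ σ : Fin r → Bool, ∑ k : Fin r → TM M,
              (Hc k σ *
                ∏ j, (if σ j then w (k j) else (starRingEnd ℂ) (w (k j)))).re) u v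
          = ∑ kk : TM M, (g kk * (starRingEnd ℂ) (v kk)).re) →
    Real.sqrt (∑ kk : TM M,
        (Real.sqrt (1 + ((kk.1 : ℕ) : ℝ) ^ 2))⁻¹ * ‖g kk‖ ^ 2)
      ≤ C * Real.log M ^ ((r : ℝ) / 2) * A *
        Real.sqrt (∑ kk : TM M,
            Real.sqrt (1 + ((kk.1 : ℕ) : ℝ) ^ 2) * ‖u kk‖ ^ 2) ^ (r - 1) := by
  classical
  have hrR : (0:ℝ) < r := by
    have : 0 < r := by omega
    exact_mod_cast this
  refine ⟨(r:ℝ) * 2^r * 12^r, by positivity, ?_⟩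
  intro M hM A Hc hsym hreal hbound u g hgrad
  have hA : 0 ≤ A := by
    have kk0 : TM M := ⟨⟨0, Nat.succ_pos M⟩, ⟨0, Nat.succ_pos _⟩⟩
    have hD : 0 < Real.sqrt (∏ j : Fin r,
        Real.sqrt (1 + ((((fun _ => kk0) j : TM M).1:ℕ):ℝ)^2)) := by
      apply Real.sqrt_pos.mpr
      refine Finset.prod_pos fun j _ => Real.sqrt_pos.mpr (by positivity)
    have h := (norm_nonneg (Hc (fun _ => kk0) (fun _ => true))).trans
      (hbound (fun _ => kk0) (fun _ => true))
    rcases div_nonneg_iff.mp h with ⟨h1, _⟩ | ⟨_, h2⟩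
    · exact h1
    · exact absurd hD (not_lt.mpr h2)
  obtain ⟨L, hLdef⟩ : ∃ x : ℝ, x = ∑ y : TM M,
      (Real.sqrt (Real.sqrt (1 + ((y.1:ℕ):ℝ)^2)))⁻¹ * ‖u y‖ := ⟨_, rfl⟩
  obtain ⟨N, hNdef⟩ : ∃ x : ℝ, x = Real.sqrt (∑ kk : TM M,
      Real.sqrt (1 + ((kk.1:ℕ):ℝ)^2) * ‖u kk‖^2) := ⟨_, rfl⟩
  obtain ⟨S₂, hS₂def⟩ : ∃ x : ℝ, x = ∑ kk : TM M, (1 + ((kk.1:ℕ):ℝ)^2)⁻¹ := ⟨_, rfl⟩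
  rw [← hNdef]
  have hS₂0 : 0 ≤ S₂ := hS₂def ▸ Finset.sum_nonneg fun kk _ => by positivity
  have hN0 : 0 ≤ N := hNdef ▸ Real.sqrt_nonneg _
  have hL0 : 0 ≤ L := hLdef ▸ Finset.sum_nonneg fun x _ => by positivity
  -- Cauchy–Schwarz : L ≤ √S₂ * N
  have hLN : L ≤ Real.sqrt S₂ * N := by
    have hCS : (∑ kk : TM M, Real.sqrt ((1 + ((kk.1:ℕ):ℝ)^2)⁻¹)
          * Real.sqrt (Real.sqrt (1 + ((kk.1:ℕ):ℝ)^2) * ‖u kk‖^2))^2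
        ≤ (∑ kk : TM M, Real.sqrt ((1 + ((kk.1:ℕ):ℝ)^2)⁻¹)^2)
          * (∑ kk : TM M, Real.sqrt (Real.sqrt (1 + ((kk.1:ℕ):ℝ)^2)
              * ‖u kk‖^2)^2) :=
      Finset.sum_mul_sq_le_sq_mul_sq _ _ _
    have e1 : (∑ kk : TM M, Real.sqrt ((1 + ((kk.1:ℕ):ℝ)^2)⁻¹)
        * Real.sqrt (Real.sqrt (1 + ((kk.1:ℕ):ℝ)^2) * ‖u kk‖^2)) = L := by
      rw [hLdef]
      exact Finset.sum_congr rfl fun kk _ =>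
        ptwise_CS _ _ (by positivity) (norm_nonneg _)
    have e2 : (∑ kk : TM M, Real.sqrt ((1 + ((kk.1:ℕ):ℝ)^2)⁻¹)^2) = S₂ := by
      rw [hS₂def]
      exact Finset.sum_congr rfl fun kk _ => Real.sq_sqrt (by positivity)
    have e3 : (∑ kk : TM M, Real.sqrt (Real.sqrt (1 + ((kk.1:ℕ):ℝ)^2)
        * ‖u kk‖^2)^2) = N^2 := by
      rw [hNdef, Real.sq_sqrt (Finset.sum_nonneg fun kk _ => by positivity)]
      exact Finset.sum_congr rfl fun kk _ => Real.sq_sqrt (by positivity)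
    rw [e1, e2, e3] at hCS
    calc L = Real.sqrt (L^2) := (Real.sqrt_sq hL0).symm
      _ ≤ Real.sqrt (S₂ * N^2) := Real.sqrt_le_sqrt hCS
      _ = Real.sqrt S₂ * N := by rw [Real.sqrt_mul hS₂0, Real.sqrt_sq hN0]
  -- pointwise bound on g
  have hgb : ∀ kk : TM M, ‖g kk‖
      ≤ 2^r * r * (A * (Real.sqrt (Real.sqrt (1 + ((kk.1:ℕ):ℝ)^2)))⁻¹ * L^(r-1)) := by
    intro kk
    rw [hLdef]
    exact (grad_bound Hc u g hgrad kk).trans (S_bound A Hc hbound hA u kk)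
  obtain ⟨c, hcdef⟩ : ∃ x : ℝ, x = 2^r * (r:ℝ) * A * L^(r-1) := ⟨_, rfl⟩
  have hc0 : 0 ≤ c := by
    rw [hcdef]
    exact mul_nonneg (mul_nonneg (mul_nonneg (by positivity) (by positivity)) hA)
      (pow_nonneg hL0 _)
  have hsumbound : ∑ kk : TM M,
      (Real.sqrt (1 + ((kk.1:ℕ):ℝ)^2))⁻¹ * ‖g kk‖^2 ≤ c^2 * S₂ := by
    rw [hS₂def, Finset.mul_sum]
    refine Finset.sum_le_sum fun kk _ => ?_
    have hW0 : (0:ℝ) < 1 + ((kk.1:ℕ):ℝ)^2 := by positivity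
    have hbb : ‖g kk‖^2
        ≤ (2^r * r * (A * (Real.sqrt (Real.sqrt (1 + ((kk.1:ℕ):ℝ)^2)))⁻¹ * L^(r-1)))^2 :=
      pow_le_pow_left₀ (norm_nonneg _) (hgb kk) 2
    calc (Real.sqrt (1 + ((kk.1:ℕ):ℝ)^2))⁻¹ * ‖g kk‖^2
        ≤ (Real.sqrt (1 + ((kk.1:ℕ):ℝ)^2))⁻¹
          * (2^r * r * (A * (Real.sqrt (Real.sqrt (1 + ((kk.1:ℕ):ℝ)^2)))⁻¹ * L^(r-1)))^2 :=
          mul_le_mul_of_nonneg_left hbb (by positivity)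
      _ = c^2 * ((Real.sqrt (1 + ((kk.1:ℕ):ℝ)^2))⁻¹
            * ((Real.sqrt (Real.sqrt (1 + ((kk.1:ℕ):ℝ)^2)))⁻¹)^2) := by
          rw [hcdef]; ring
      _ = c^2 * (1 + ((kk.1:ℕ):ℝ)^2)⁻¹ := by rw [inv_sqrt_sq _ hW0]
  -- log facts
  have hlogM0 : 0 ≤ Real.log M := by
    apply Real.log_nonneg
    have : (1:ℝ) ≤ 2 := one_le_two
    have h2 : (2:ℝ) ≤ (M:ℝ) := by exact_mod_cast hM
    linarith
  have hS₂log : S₂ ≤ 12 * Real.log M := hS₂def ▸ sum_inv_le M hM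
  have h12l0 : (0:ℝ) ≤ 12 * Real.log M := by positivity
  have hsqS₂ : Real.sqrt S₂ ≤ Real.sqrt (12 * Real.log M) := Real.sqrt_le_sqrt hS₂log
  have hpow : (Real.sqrt (12 * Real.log M))^r
      = (12:ℝ)^((r:ℝ)/2) * (Real.log M)^((r:ℝ)/2) := by
    rw [Real.sqrt_eq_rpow, ← Real.rpow_natCast ((12 * Real.log M) ^ (1/(2:ℝ))) r,
      ← Real.rpow_mul h12l0, ← Real.mul_rpow (by norm_num) hlogM0]
    norm_num
    ring_nf
  have h12 : (12:ℝ)^((r:ℝ)/2) ≤ (12:ℝ)^r := by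
    rw [← Real.rpow_natCast (12:ℝ) r]
    refine Real.rpow_le_rpow_of_exponent_le (by norm_num) ?_
    have h0r : (0:ℝ) ≤ (r:ℝ) := by positivity
    linarith
  have hrpos : 0 ≤ (Real.log M)^((r:ℝ)/2) := Real.rpow_nonneg hlogM0 _
  calc Real.sqrt (∑ kk : TM M,
        (Real.sqrt (1 + ((kk.1:ℕ):ℝ)^2))⁻¹ * ‖g kk‖^2)
      ≤ Real.sqrt (c^2 * S₂) := Real.sqrt_le_sqrt hsumbound
    _ = c * Real.sqrt S₂ := by
        rw [Real.sqrt_mul (sq_nonneg c), Real.sqrt_sq hc0]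
    _ = 2^r * r * A * (L^(r-1) * Real.sqrt S₂) := by rw [hcdef]; ring
    _ ≤ 2^r * r * A * ((Real.sqrt (12 * Real.log M) * N)^(r-1)
          * Real.sqrt (12 * Real.log M)) := by
        have hL' : L^(r-1) ≤ (Real.sqrt (12 * Real.log M) * N)^(r-1) := by
          refine pow_le_pow_left₀ hL0 (hLN.trans ?_) _
          exact mul_le_mul_of_nonneg_right hsqS₂ hN0
        have h1 : L^(r-1) * Real.sqrt S₂
            ≤ (Real.sqrt (12 * Real.log M) * N)^(r-1) * Real.sqrt (12 * Real.log M) :=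
          mul_le_mul hL' hsqS₂ (Real.sqrt_nonneg _)
            (pow_nonneg (mul_nonneg (Real.sqrt_nonneg _) hN0) _)
        exact mul_le_mul_of_nonneg_left h1 (mul_nonneg (by positivity) hA)
    _ = 2^r * r * A * ((Real.sqrt (12 * Real.log M))^r * N^(r-1)) := by
        have hexp : r - 1 + 1 = r := by omega
        have hh : (Real.sqrt (12 * Real.log M))^(r-1) * Real.sqrt (12 * Real.log M)
            = (Real.sqrt (12 * Real.log M))^r := by
          rw [← pow_succ, hexp]
        rw [mul_pow, ← hh]
        ring
    _ = 2^r * r * A * ((12:ℝ)^((r:ℝ)/2) * (Real.log M)^((r:ℝ)/2) * N^(r-1)) := by rw [hpow]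
    _ ≤ 2^r * r * A * ((12:ℝ)^r * (Real.log M)^((r:ℝ)/2) * N^(r-1)) := by
        refine mul_le_mul_of_nonneg_left ?_ (mul_nonneg (by positivity) hA)
        exact mul_le_mul_of_nonneg_right (mul_le_mul_of_nonneg_right h12 hrpos)
          (pow_nonneg hN0 _)
    _ = (r:ℝ) * 2^r * 12^r * Real.log M ^ ((r:ℝ)/2) * A * N^(r-1) := by ring
end
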